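/- Let V = (ℤ/pℤ)^{2d}, G ≤ GL_{2d}(𝔽_p), H a Sylow p-subgroup of G, and N ⊴ G with G/N cyclic of order p−1. Set i = gcd((2d)!, p−1). Then the normalizer of H in G contains an element of order p−1 whose class modulo N has order divisible by (p−1)/i. -/

import Mathlib

open Polynomial

lemma nt_bound {p q k D b : ℕ} (hp : p.Prime) (hpodd : Odd p) (hq : q.Prime)
    (hqdvd : q ∣ p - 1) (hk0 : 0 < k) (hkD : k ≤ D) (hD2 : 2 ≤ D)
    (hdvd : q ^ b ∣ p ^ k - 1) :
    min (b - (p - 1).factorization q) ((p - 1).factorization q)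
      ≤ (D.factorial).factorization q := by
  have hp3 : 3 ≤ p := by
    rcases hpodd with ⟨t, ht⟩
    have := hp.two_le; omega
  have hp1 : 1 < p := by omega
  set e := (p - 1).factorization q with he
  by_cases hbe : b ≤ e
  · simp [Nat.sub_eq_zero_of_le hbe]
  push_neg at hbe
  have he1 : 1 ≤ e := hq.factorization_pos_of_dvd (by omega) hqdvd
  have hqp : ¬ q ∣ p := by
    intro h
    have h1 : q ∣ p - (p - 1) := Nat.dvd_sub h hqdvd
    have h2 : p - (p - 1) = 1 := by omega
    rw [h2] at h1
    exact hq.one_lt.ne' (Nat.dvd_one.mp h1)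
  have hpk1 : 0 < p ^ k - 1 := by
    have := Nat.one_lt_pow hk0.ne' hp1
    omega
  have hb_le : b ≤ (p ^ k - 1).factorization q :=
    (hq.pow_dvd_iff_le_factorization hpk1.ne').mp hdvd
  have hfact : k.factorization q ≤ (D.factorial).factorization q := by
    have h1 : q ^ k.factorization q ∣ k := Nat.ordProj_dvd k q
    have h2 : k ∣ D.factorial := Nat.dvd_factorial hk0 hkD
    exact (hq.pow_dvd_iff_le_factorization (Nat.factorial_ne_zero D)).mp (h1.trans h2)
  have hconv1 : (p ^ k - 1).factorization q = padicValNat q (p ^ k - 1) :=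
    Nat.factorization_def _ hq
  have hconv2 : (p - 1).factorization q = padicValNat q (p - 1) :=
    Nat.factorization_def _ hq
  have hconv3 : k.factorization q = padicValNat q k := Nat.factorization_def _ hq
  -- main claim
  have key : b ≤ e + k.factorization q ∨ b ≤ e ∨ min (b - e) e ≤ (D.factorial).factorization q := by
    rcases eq_or_ne q 2 with rfl | hq2
    · by_cases he2 : 2 ≤ e
      · have h4 : (4 : ℕ) ∣ p - 1 := by
          have : 2 ^ 2 ∣ p - 1 := (hq.pow_dvd_iff_le_factorization (by omega)).mpr he2
          simpa using this
        rcases Nat.even_or_odd k with hke | hko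
        · -- even k : LTE for 2
          haveI : Fact (Nat.Prime 2) := ⟨hq⟩
          have lte := padicValNat.pow_two_sub_pow (x := p) (y := 1) hp1
            (by simpa using hqdvd) (by simpa using hqp) hk0.ne' (by simpa using hke)
          simp only [one_pow] at lte
          have hp1odd : ¬ (4 : ℕ) ∣ p + 1 := by
            intro h
            have h5 : (4:ℕ) ∣ (p + 1) - (p - 1) := Nat.dvd_sub h h4
            have h2 : (p+1) - (p-1) = 2 := by omega
            omega
          have hv1 : padicValNat 2 (p + 1) ≤ 1 := by
            by_contra hcon
            push_neg at hcon
            refine hp1odd ?_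
            have h6 : 2 ≤ (p+1).factorization 2 := by
              rw [Nat.factorization_def _ hq]; omega
            have : 2 ^ 2 ∣ p + 1 := (hq.pow_dvd_iff_le_factorization (by omega)).mpr h6
            simpa using this
          left
          omega
        · -- odd k : 2-adic valuation of p^k - 1 equals e
          right; left
          set S := ∑ i ∈ Finset.range k, p ^ i with hS
          have hzsum : ((S : ℕ) : ℤ) = ∑ i ∈ Finset.range k, (p : ℤ) ^ i := by
            rw [hS]; push_cast; ring
          have hid : (p - 1) * S = p ^ k - 1 := by
            have h7 : ((p - 1 : ℕ) : ℤ) * (S : ℤ) = ((p ^ k - 1 : ℕ) : ℤ) := by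
              rw [hzsum, Nat.cast_sub (by omega : 1 ≤ p),
                Nat.cast_sub (Nat.one_le_pow k p (by omega))]
              push_cast
              rw [mul_comm]
              exact geom_sum_mul (p : ℤ) k
            exact_mod_cast h7
          have hSodd : ¬ (2 : ℕ) ∣ S := by
            intro h
            have h0 : ((S : ℕ) : ZMod 2) = 0 := (ZMod.natCast_eq_zero_iff S 2).mpr h
            have hpcast : ((p : ℕ) : ZMod 2) = 1 := by
              rw [← ZMod.natCast_mod, Nat.odd_iff.mp hpodd, Nat.cast_one]
            have h8 : ((S : ℕ) : ZMod 2) = 1 := by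
              rw [hS]
              push_cast
              simp only [hpcast, one_pow, Finset.sum_const, Finset.card_range, nsmul_eq_mul,
                mul_one]
              rw [show ((k : ℕ) : ZMod 2) = 1 from by
                rw [← ZMod.natCast_mod, Nat.odd_iff.mp hko, Nat.cast_one]]
            rw [h0] at h8
            exact one_ne_zero h8.symm
          have hcop : Nat.Coprime (2 ^ b) S :=
            Nat.Coprime.pow_left _ ((Nat.coprime_two_left).mpr (Nat.odd_iff.mpr (by omega)))
          have hdvd' : 2 ^ b ∣ (p - 1) * S := by rw [hid]; exact hdvd
          have h9 : 2 ^ b ∣ p - 1 := hcop.dvd_of_dvd_mul_right hdvd'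
          exact (hq.pow_dvd_iff_le_factorization (by omega)).mp h9
      · -- e = 1
        right; right
        have h2D : (1:ℕ) ≤ (D.factorial).factorization 2 :=
          hq.factorization_pos_of_dvd (Nat.factorial_ne_zero D)
            (Nat.dvd_factorial (by omega) hD2)
        omega
    · -- q odd
      left
      haveI : Fact (Nat.Prime q) := ⟨hq⟩
      have hqodd : Odd q := hq.odd_of_ne_two hq2
      have lte := padicValNat.pow_sub_pow (p := q) hqodd (x := p) (y := 1) hp1
        (by simpa using hqdvd) hqp hk0.ne'
      simp only [one_pow] at lte
      omega
  rcases key with h | h | h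
  · omega
  · omega
  · exact h

lemma matrix_order_bound {p q b D : ℕ} [Fact p.Prime] (hq : q.Prime) (hqp : ¬ q ∣ p)
    (hb : 0 < b) (hD : 0 < D) (M : Matrix (Fin D) (Fin D) (ZMod p))
    (h1 : M ^ q ^ b = 1) (h2 : M ^ q ^ (b - 1) ≠ 1) :
    ∃ k, 0 < k ∧ k ≤ D ∧ q ^ b ∣ p ^ k - 1 := by
  have hp : p.Prime := Fact.out
  set P := minpoly (ZMod p) M with hPdef
  have hint : IsIntegral (ZMod p) M := IsIntegral.of_finite _ _
  have hP0 : P ≠ 0 := minpoly.ne_zero hint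
  have hPdvd : P ∣ X ^ (q ^ b) - 1 := by
    apply minpoly.dvd
    simp [h1]
  have hqb0 : ((q ^ b : ℕ) : ZMod p) ≠ 0 := by
    rw [Ne, ZMod.natCast_eq_zero_iff]
    intro h
    have hpq : p = q := (Nat.prime_dvd_prime_iff_eq hp hq).mp (hp.dvd_of_dvd_pow h)
    exact hqp (hpq ▸ dvd_refl p)
  have hsep : (X ^ (q ^ b) - 1 : (ZMod p)[X]).Separable := by
    have := separable_X_pow_sub_C (1 : ZMod p) hqb0 one_ne_zero
    simpa using this
  have hPsf : Squarefree P := Squarefree.squarefree_of_dvd hPdvd hsep.squarefree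
  have hPnd : ¬ P ∣ X ^ (q ^ (b - 1)) - 1 := by
    intro h
    apply h2
    obtain ⟨c, hc⟩ := h
    have : (aeval M) (X ^ (q ^ (b - 1)) - 1 : (ZMod p)[X]) = 0 := by
      rw [hc, map_mul, minpoly.aeval, zero_mul]
    simp only [map_sub, map_pow, aeval_X, map_one] at this
    rwa [sub_eq_zero] at this
  -- find irreducible factor f of P not dividing X^(q^(b-1)) - 1
  obtain ⟨f, hf_irr, hf_dvd, hf_nd⟩ :
      ∃ f : (ZMod p)[X], Irreducible f ∧ f ∣ P ∧ ¬ f ∣ X ^ (q ^ (b - 1)) - 1 := by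
    set g := gcd P (X ^ (q ^ (b - 1)) - 1) with hg
    have hgP : g ∣ P := gcd_dvd_left _ _
    have hgQ : g ∣ X ^ (q ^ (b - 1)) - 1 := gcd_dvd_right _ _
    obtain ⟨r, hr⟩ := hgP
    have hr_nu : ¬ IsUnit r := by
      intro hu
      apply hPnd
      obtain ⟨u, rfl⟩ := hu
      have hPg : P ∣ g := ⟨↑u⁻¹, by rw [hr, mul_assoc]; simp⟩
      exact hPg.trans hgQ
    have hr0 : r ≠ 0 := by rintro rfl; rw [mul_zero] at hr; exact hP0 hr
    obtain ⟨f, hf_irr, hf_r⟩ := WfDvdMonoid.exists_irreducible_factor hr_nu hr0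
    refine ⟨f, hf_irr, hf_r.trans (Dvd.intro_left g hr.symm), ?_⟩
    intro hfQ
    have hfg : f ∣ g := dvd_gcd (hf_r.trans (Dvd.intro_left g hr.symm)) hfQ
    have : f * f ∣ P := by
      rw [hr]
      exact mul_dvd_mul hfg hf_r
    exact hf_irr.not_isUnit (hPsf f this)
  set k := f.natDegree with hk
  have hk0 : 0 < k := hf_irr.natDegree_pos
  have hkD : k ≤ D := by
    have hchar : P ∣ M.charpoly := minpoly.dvd _ _ (Matrix.aeval_self_charpoly M)
    have : k ≤ M.charpoly.natDegree :=
      natDegree_le_of_dvd (hf_dvd.trans hchar) (Matrix.charpoly_monic M).ne_zero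
    rwa [Matrix.charpoly_natDegree_eq_dim, Fintype.card_fin] at this
  haveI : Fact (Irreducible f) := ⟨hf_irr⟩
  have hf0 : f ≠ 0 := hf_irr.ne_zero
  set K := AdjoinRoot f with hK
  letI : Fintype K := Module.fintypeOfFintype (AdjoinRoot.powerBasis hf0).basis
  have hcard : Fintype.card K = p ^ k := by
    rw [Module.card_eq_pow_finrank (K := ZMod p) (V := K), ZMod.card,
      (AdjoinRoot.powerBasis hf0).finrank, AdjoinRoot.powerBasis_dim]
  set α := AdjoinRoot.root f with hα
  have hα1 : α ^ q ^ b = 1 := by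
    have : (AdjoinRoot.mk f) (X ^ (q ^ b) - 1) = 0 :=
      AdjoinRoot.mk_eq_zero.mpr (hf_dvd.trans hPdvd)
    rw [map_sub, map_pow, AdjoinRoot.mk_X, map_one, sub_eq_zero] at this
    exact this
  have hα2 : α ^ q ^ (b - 1) ≠ 1 := by
    intro h
    apply hf_nd
    rw [← AdjoinRoot.mk_eq_zero, map_sub, map_pow, AdjoinRoot.mk_X, map_one, sub_eq_zero]
    exact h
  have hαo : orderOf α = q ^ b := by
    have hdvd : orderOf α ∣ q ^ b := orderOf_dvd_of_pow_eq_one hα1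
    obtain ⟨c, hcb, hc⟩ := (Nat.dvd_prime_pow hq).mp hdvd
    have hcb2 : c = b := by
      by_contra hne
      have hcb' : c ≤ b - 1 := by omega
      have : orderOf α ∣ q ^ (b - 1) := hc ▸ pow_dvd_pow q hcb'
      exact hα2 (orderOf_dvd_iff_pow_eq_one.mp this)
    rw [hc, hcb2]
  have hα0 : α ≠ 0 := by
    intro h0
    rw [h0, zero_pow (pow_ne_zero b hq.ne_zero)] at hα1
    exact zero_ne_one hα1
  have hfin : α ^ (Fintype.card K - 1) = 1 := FiniteField.pow_card_sub_one_eq_one α hα0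
  have : q ^ b ∣ Fintype.card K - 1 := hαo ▸ orderOf_dvd_of_pow_eq_one hfin
  exact ⟨k, hk0, hkD, by rwa [hcard] at this⟩

theorem stmt_11 (p d : ℕ) [Fact p.Prime] (hd : 0 < d)
    (G : Subgroup (Matrix.GeneralLinearGroup (Fin (2*d)) (ZMod p)))
    (H : Sylow p G) (N : Subgroup G) [N.Normal]
    (hquot : Nonempty ((G ⧸ N) ≃* Multiplicative (ZMod (p - 1)))) :
    ∃ x : G, x ∈ Subgroup.normalizer ((H : Subgroup G) : Set G) ∧ orderOf x = p - 1 ∧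
      (p - 1) / Nat.gcd (Nat.factorial (2*d)) (p - 1) ∣
        orderOf (QuotientGroup.mk x : G ⧸ N) := by
  have hp : p.Prime := Fact.out
  by_cases hp2 : p = 2
  · refine ⟨1, one_mem _, ?_, ?_⟩
    · simp [hp2]
    · subst hp2; simp
  have hpodd : Odd p := hp.odd_of_ne_two hp2
  have hp3 : 3 ≤ p := by
    rcases hpodd with ⟨t, ht⟩
    have := hp.two_le; omega
  obtain ⟨e⟩ := hquot
  have hcard : Nat.card (G ⧸ N) = p - 1 := by
    rw [Nat.card_congr e.toEquiv]
    exact Nat.card_zmod (p-1)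
  -- H ≤ N
  have hHN : (H : Subgroup G) ≤ N := by
    intro g hg
    obtain ⟨kk, hk⟩ := H.2 ⟨g, hg⟩
    have hg1 : g ^ p ^ kk = 1 := by
      have h := congrArg (Subtype.val) hk
      rw [Subgroup.coe_pow] at h
      simpa using h
    have h1 : (QuotientGroup.mk g : G ⧸ N) ^ p ^ kk = 1 := by
      rw [← QuotientGroup.mk_pow, hg1, QuotientGroup.mk_one]
    have h2 : orderOf (QuotientGroup.mk g : G ⧸ N) ∣ p ^ kk := orderOf_dvd_of_pow_eq_one h1
    have h3 : orderOf (QuotientGroup.mk g : G ⧸ N) ∣ p - 1 := by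
      rw [← hcard]; exact orderOf_dvd_natCard _
    have hcp : Nat.Coprime p (p - 1) := by
      have ha1 := Nat.gcd_dvd_left p (p-1)
      have ha2 := Nat.gcd_dvd_right p (p-1)
      have ha3 := Nat.dvd_sub ha1 ha2
      rw [show p - (p-1) = 1 by omega] at ha3
      exact Nat.dvd_one.mp ha3
    have h4 : orderOf (QuotientGroup.mk g : G ⧸ N) ∣ 1 := by
      have h5 := Nat.dvd_gcd h2 h3
      rwa [Nat.Coprime.gcd_eq_one ((hcp.pow_left kk))] at h5
    exact (QuotientGroup.eq_one_iff g).mp (orderOf_eq_one_iff.mp (Nat.dvd_one.mp h4))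
  -- Frattini
  have htop := Sylow.normalizer_sup_eq_top' H hHN
  -- generator of the quotient
  set g0 : G ⧸ N := e.symm (Multiplicative.ofAdd (1 : ZMod (p-1))) with hg0def
  have hg0 : orderOf g0 = p - 1 := by
    rw [hg0def, show e.symm (Multiplicative.ofAdd (1 : ZMod (p-1))) =
        e.symm.toMonoidHom (Multiplicative.ofAdd 1) from rfl,
      orderOf_injective e.symm.toMonoidHom e.symm.injective,
      orderOf_ofAdd_eq_addOrderOf, ZMod.addOrderOf_one]
  obtain ⟨w, hw⟩ := QuotientGroup.mk'_surjective N g0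
  have hwmem : w ∈ (Subgroup.normalizer ((H : Subgroup G) : Set G) ⊔ N : Subgroup G) := htop ▸ Subgroup.mem_top w
  rw [← SetLike.mem_coe, Subgroup.mul_normal] at hwmem
  obtain ⟨u, hu, v, hv, huv⟩ := hwmem
  have hu' : u ∈ Subgroup.normalizer ((H : Subgroup G) : Set G) := hu
  have hmku : (QuotientGroup.mk u : G ⧸ N) = g0 := by
    have huv' : u * v = w := huv
    have h6 : (QuotientGroup.mk (u * v) : G ⧸ N) = g0 := by rw [huv']; exact hw
    rwa [QuotientGroup.mk_mul, (QuotientGroup.eq_one_iff v).mpr hv, mul_one] at h6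
  set n := orderOf u with hn
  have hn0 : n ≠ 0 := (orderOf_pos u).ne'
  have hdvd_n : p - 1 ∣ n := by
    have h7 := orderOf_map_dvd (QuotientGroup.mk' N) u
    rwa [show (QuotientGroup.mk' N) u = QuotientGroup.mk u from rfl, hmku, hg0] at h7
  set m := n / (p - 1) with hm
  have hm0 : m ≠ 0 := by
    intro h
    have h8 := Nat.div_mul_cancel hdvd_n
    rw [← hm, h, zero_mul] at h8
    exact hn0 h8.symm
  have hmdvd : m ∣ n := Nat.div_dvd_of_dvd hdvd_n
  -- the gcd claim
  have hgcd : Nat.gcd m (p - 1) ∣ Nat.factorial (2*d) := by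
    rw [← Nat.factorization_le_iff_dvd (Nat.gcd_ne_zero_left hm0) (Nat.factorial_ne_zero _),
      Finsupp.le_def]
    intro q
    by_cases hqq : q.Prime
    · rw [Nat.factorization_gcd hm0 (by omega), Finsupp.inf_apply, hm,
        Nat.factorization_div hdvd_n, Finsupp.tsub_apply]
      by_cases hqdvd : q ∣ p - 1
      · set b := n.factorization q with hb
        by_cases hble : b ≤ (p - 1).factorization q
        · have : b - (p-1).factorization q = 0 := Nat.sub_eq_zero_of_le hble
          rw [this]
          simp
        · push_neg at hble
          have hbpos : 0 < b := by
            have := hqq.factorization_pos_of_dvd (by omega : p - 1 ≠ 0) hqdvd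
            omega
          have hqbn : q ^ b ∣ n := Nat.ordProj_dvd n q
          set z := u ^ (n / q ^ b) with hz
          have hzo : orderOf z = q ^ b := by
            rw [hz, orderOf_pow, ← hn, Nat.gcd_eq_right (Nat.div_dvd_of_dvd hqbn),
              Nat.div_div_self hqbn hn0]
          have h1 : orderOf ((z : Matrix.GeneralLinearGroup (Fin (2*d)) (ZMod p))) = q ^ b := by
            rw [← hzo]
            exact orderOf_injective G.subtype Subtype.coe_injective z
          have h2 : orderOf (((z : Matrix.GeneralLinearGroup (Fin (2*d)) (ZMod p)) :
              Matrix (Fin (2*d)) (Fin (2*d)) (ZMod p))) = q ^ b := by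
            rw [orderOf_units]; exact h1
          have hM1 : (((z : Matrix.GeneralLinearGroup (Fin (2*d)) (ZMod p)) :
              Matrix (Fin (2*d)) (Fin (2*d)) (ZMod p))) ^ q ^ b = 1 := by
            rw [← h2]; exact pow_orderOf_eq_one _
          have hM2 : (((z : Matrix.GeneralLinearGroup (Fin (2*d)) (ZMod p)) :
              Matrix (Fin (2*d)) (Fin (2*d)) (ZMod p))) ^ q ^ (b-1) ≠ 1 := by
            apply pow_ne_one_of_lt_orderOf (pow_ne_zero _ hqq.pos.ne')
            rw [h2]
            exact Nat.pow_lt_pow_right hqq.one_lt (by omega)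
          have hqp : ¬ q ∣ p := by
            intro h
            have h1' : q ∣ p - (p - 1) := Nat.dvd_sub h hqdvd
            have h2' : p - (p - 1) = 1 := by omega
            rw [h2'] at h1'
            exact hqq.one_lt.ne' (Nat.dvd_one.mp h1')
          obtain ⟨k, hk0, hkD, hkdvd⟩ := matrix_order_bound hqq hqp hbpos
            (by omega : 0 < 2*d) _ hM1 hM2
          exact nt_bound hp hpodd hqq hqdvd hk0 hkD (by omega : 2 ≤ 2*d) hkdvd
      · rw [Nat.factorization_eq_zero_of_not_dvd hqdvd]
        simp
    · rw [Nat.factorization_eq_zero_of_not_prime _ hqq]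
      simp
  -- conclusion
  refine ⟨u ^ m, Subgroup.pow_mem _ hu' m, ?_, ?_⟩
  · rw [orderOf_pow, ← hn, Nat.gcd_eq_right hmdvd, Nat.div_div_self hdvd_n hn0]
  · have hmk : (QuotientGroup.mk (u ^ m) : G ⧸ N) = g0 ^ m := by
      rw [QuotientGroup.mk_pow, hmku]
    rw [hmk, orderOf_pow, hg0]
    -- goal : (p-1) / gcd ((2d)!) (p-1) ∣ (p-1) / gcd (p-1) m
    set a := Nat.gcd (p-1) m with hadef
    set i := Nat.gcd (Nat.factorial (2*d)) (p - 1) with hidef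
    have hacomm : a = Nat.gcd m (p - 1) := Nat.gcd_comm _ _
    have hai : a ∣ i := Nat.dvd_gcd (hacomm ▸ hgcd) (hacomm ▸ Nat.gcd_dvd_right m (p-1))
    have hidvd : i ∣ p - 1 := Nat.gcd_dvd_right _ _
    have ha0 : 0 < a := Nat.gcd_pos_of_pos_left _ (by omega)
    have hi0 : 0 < i := Nat.pos_of_ne_zero fun h => (by omega : ¬ p - 1 = 0)
      (by rw [h] at hidvd; exact Nat.eq_zero_of_zero_dvd hidvd)
    obtain ⟨s, hs⟩ := hai
    obtain ⟨t, ht⟩ := hidvd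
    have h1 : (p-1) / i = t := by rw [ht]; exact Nat.mul_div_cancel_left t hi0
    have h2 : (p-1) / a = s * t := by
      rw [ht, hs, mul_assoc]; exact Nat.mul_div_cancel_left _ ha0
    rw [h1, h2]
    exact Dvd.intro_left s rfl
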